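/- Fix T ∈ ℕ and ε > 0 with Tε > 1. For k ∈ ℕ let ũ(k) := ⌊(1+ε) log_{1/√(pq)} k^T⌋ + 1 and A_{k^T} := ∪_{i=1}^{k^T − ũ(k) + 1} { S_{ũ(k)}^{(i)} = ũ(k) − 1 }. Then ∑_{k=1}^∞ P(A_{k^T}) < ∞, and consequently P(A_{k^T} occurs for infinitely many k) = 0. -/

import Mathlib

open MeasureTheory ProbabilityTheory Filter
open scoped Classical

/-- `switchCount X n m ω` is the number of switches `S_n^{(m)}` in the `n` trials
`X_m, …, X_{m+n-1}`. -/
def switchCount {Ω : Type*} (X : ℕ → Ω → ℕ) (n m : ℕ) (ω : Ω) : ℕ :=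
  ∑ i ∈ Finset.Icc (m + 1) (n + m - 1),
    ((1 - X (i - 1) ω) * X i ω + X (i - 1) ω * (1 - X i ω))

/-- `longestSwitch X N m ω` is `M_N^{(m)}`, the length of the longest run of consecutive
switches in the trials `X_m, …, X_{m+N-1}`. -/
noncomputable def longestSwitch {Ω : Type*} (X : ℕ → Ω → ℕ) (N m : ℕ) (ω : Ω) : ℕ :=
  ((Finset.Icc 1 N).filter fun n =>
      ∃ i ∈ Finset.Icc m (m + N - n + 1), switchCount X n i ω = n - 1).sup
    fun n => n - 1

/-- Inclusion into the union of the two alternating-pattern events. -/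
lemma switch_subset {Ω : Type*} (X : ℕ → Ω → ℕ) (hval : ∀ i ω, X i ω ≤ 1) (n i : ℕ) :
    {ω | switchCount X n i ω = n - 1} ⊆
      (⋂ m ∈ Finset.Ico i (i + n), X m ⁻¹' {(0 + (m - i)) % 2}) ∪
      (⋂ m ∈ Finset.Ico i (i + n), X m ⁻¹' {(1 + (m - i)) % 2}) := by
  intro ω hω
  rcases Nat.eq_zero_or_pos n with hn | hn
  · subst hn; left; simp
  obtain ⟨n, rfl⟩ : ∃ m, n = m + 1 := ⟨n - 1, by omega⟩
  have hcard : (Finset.Icc (i + 1) (n + 1 + i - 1)).card = n := by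
    rw [Nat.card_Icc]; omega
  have hsum : ∑ m ∈ Finset.Icc (i + 1) (n + 1 + i - 1),
      ((1 - X (m - 1) ω) * X m ω + X (m - 1) ω * (1 - X m ω)) = n := by
    have := hω
    simp only [Set.mem_setOf_eq, switchCount] at this
    simpa using this
  have hle : ∀ m ∈ Finset.Icc (i + 1) (n + 1 + i - 1),
      ((1 - X (m - 1) ω) * X m ω + X (m - 1) ω * (1 - X m ω)) ≤ 1 := by
    intro m _
    have h1 := hval (m - 1) ω; have h2 := hval m ω
    interval_cases (X (m - 1) ω) <;> interval_cases (X m ω) <;> simp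
  have hall : ∀ m ∈ Finset.Icc (i + 1) (n + 1 + i - 1),
      ((1 - X (m - 1) ω) * X m ω + X (m - 1) ω * (1 - X m ω)) = 1 := by
    refine (Finset.sum_eq_sum_iff_of_le hle).mp ?_
    rw [hsum, Finset.sum_const, hcard, smul_eq_mul, mul_one]
  have hne : ∀ m ∈ Finset.Icc (i + 1) (n + 1 + i - 1), X (m - 1) ω + X m ω = 1 := by
    intro m hm
    have h := hall m hm
    have h1 := hval (m - 1) ω; have h2 := hval m ω
    interval_cases (X (m - 1) ω) <;> interval_cases (X m ω) <;> omega
  have key : ∀ j, j ≤ n → X (i + j) ω = (X i ω + j) % 2 := by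
    intro j
    induction j with
    | zero =>
      intro _
      have := hval i ω
      simp [Nat.mod_eq_of_lt (show X i ω < 2 by omega)]
    | succ j ih =>
      intro hj
      have h1 := ih (by omega)
      have hm : i + j + 1 ∈ Finset.Icc (i + 1) (n + 1 + i - 1) := by
        rw [Finset.mem_Icc]; omega
      have h2 := hne (i + j + 1) hm
      have h3 : i + j + 1 - 1 = i + j := by omega
      rw [h3] at h2
      have h4 := hval (i + (j + 1)) ω
      have h5 : i + (j + 1) = i + j + 1 := by omega
      rw [h5]
      omega
  have hb := hval i ω
  have hmem : ∀ b, X i ω = b →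
      ω ∈ ⋂ m ∈ Finset.Ico i (i + (n + 1)), X m ⁻¹' {(b + (m - i)) % 2} := by
    intro b hbeq
    simp only [Set.mem_iInter, Finset.mem_Ico, Set.mem_preimage, Set.mem_singleton_iff]
    rintro m ⟨hm1, hm2⟩
    have hj := key (m - i) (by omega)
    rw [show i + (m - i) = m by omega] at hj
    rw [hj, hbeq]
  interval_cases h : (X i ω)
  · left; exact hmem 0 rfl
  · right; exact hmem 1 rfl

/-- alternating product bound -/
lemma altprod {p q : ℝ} (hp0 : 0 < p) (hp1 : p < 1) (hq : q = 1 - p) (b : ℕ) :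
    ∀ n, ∏ j ∈ Finset.range n, (if (b + j) % 2 = 1 then p else q) ≤
      Real.sqrt (p * q) ^ (n - 1) := by
  have hq0 : 0 < q := by rw [hq]; linarith
  have hpq0 : 0 < p * q := mul_pos hp0 hq0
  have hr0 : 0 < Real.sqrt (p * q) := Real.sqrt_pos.mpr hpq0
  have hr1 : Real.sqrt (p * q) ≤ 1 := by
    rw [show (1:ℝ) = Real.sqrt 1 by simp]
    exact Real.sqrt_le_sqrt (by nlinarith)
  have hrsq : Real.sqrt (p * q) ^ 2 = p * q := Real.sq_sqrt hpq0.le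
  intro n
  induction n using Nat.twoStepInduction with
  | zero => simp
  | one =>
    simp only [Finset.prod_range_one, Nat.sub_self, pow_zero]
    split_ifs <;> linarith
  | more n ih _ =>
    rw [Finset.prod_range_succ, Finset.prod_range_succ]
    have hc : (if (b + n) % 2 = 1 then p else q) * (if (b + (n + 1)) % 2 = 1 then p else q)
        = p * q := by
      rcases Nat.mod_two_eq_zero_or_one (b + n) with h | h
      · rw [if_neg (by omega), if_pos (by omega)]; ring
      · rw [if_pos h, if_neg (by omega)]
    rw [mul_assoc, hc]
    calc (∏ j ∈ Finset.range n, (if (b + j) % 2 = 1 then p else q)) * (p * q)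
        ≤ Real.sqrt (p * q) ^ (n - 1) * Real.sqrt (p * q) ^ 2 := by
          rw [hrsq]
          exact mul_le_mul_of_nonneg_right (ih) hpq0.le
      _ = Real.sqrt (p * q) ^ (n - 1 + 2) := by rw [pow_add]
      _ ≤ Real.sqrt (p * q) ^ (n + 2 - 1) :=
          pow_le_pow_of_le_one hr0.le hr1 (by omega)

/-- single-variable measure -/
lemma single_meas {Ω : Type*} [MeasurableSpace Ω] (μ : Measure Ω) [IsProbabilityMeasure μ]
    {p q : ℝ} (hp0 : 0 < p) (hq : q = 1 - p)
    (X : ℕ → Ω → ℕ) (hmeas : ∀ i, Measurable (X i)) (hval : ∀ i ω, X i ω ≤ 1)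
    (hdist : ∀ i, μ {ω | X i ω = 1} = ENNReal.ofReal p)
    (m c : ℕ) (hc : c ≤ 1) :
    μ (X m ⁻¹' {c}) = ENNReal.ofReal (if c = 1 then p else q) := by
  have h1 : X m ⁻¹' {1} = {ω | X m ω = 1} := by ext ω; simp
  interval_cases c
  · have h0 : X m ⁻¹' {0} = {ω | X m ω = 1}ᶜ := by
      ext ω
      have := hval m ω
      simp only [Set.mem_preimage, Set.mem_singleton_iff, Set.mem_compl_iff, Set.mem_setOf_eq]
      omega
    have hms : MeasurableSet {ω | X m ω = 1} := by
      rw [← h1]; exact hmeas m (measurableSet_singleton 1)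
    rw [h0, prob_compl_eq_one_sub hms, hdist m, if_neg (by omega)]
    rw [hq, ENNReal.ofReal_sub 1 hp0.le, ENNReal.ofReal_one]
  · rw [h1, hdist m, if_pos rfl]

theorem summable_prob_A_and_limsup_zero
    {Ω : Type*} [MeasurableSpace Ω] (μ : Measure Ω) [IsProbabilityMeasure μ]
    (p q : ℝ) (hp0 : 0 < p) (hp1 : p < 1) (hq : q = 1 - p)
    (X : ℕ → Ω → ℕ)
    (hmeas : ∀ i, Measurable (X i))
    (hval : ∀ i ω, X i ω ≤ 1)
    (hdist : ∀ i, μ {ω | X i ω = 1} = ENNReal.ofReal p)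
    (hindep : iIndepFun X μ)
    (T : ℕ) (ε : ℝ) (hε : 0 < ε) (hT : 1 < (T : ℝ) * ε)
    (u : ℕ → ℕ)
    (hu : ∀ k : ℕ, u k = (⌊(1 + ε) * Real.logb (1 / Real.sqrt (p * q)) ((k : ℝ) ^ T)⌋).toNat + 1)
    (A : ℕ → Set Ω)
    (hA : ∀ k : ℕ, A k =
      {ω | ∃ i : ℕ, 1 ≤ i ∧ i ≤ k ^ T - u k + 1 ∧ switchCount X (u k) i ω = u k - 1}) :
    (Summable fun k : ℕ => (μ (A (k + 1))).toReal) ∧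
      μ (Filter.limsup (fun k : ℕ => A (k + 1)) atTop) = 0 := by
  set r := Real.sqrt (p * q) with hrdef
  have hq0 : 0 < q := by rw [hq]; linarith
  have hpq0 : 0 < p * q := mul_pos hp0 hq0
  have hpq1 : p * q < 1 := by nlinarith
  have hr0 : 0 < r := Real.sqrt_pos.mpr hpq0
  have hr1 : r < 1 := by
    rw [hrdef, show (1:ℝ) = Real.sqrt 1 by simp]
    exact (Real.sqrt_lt_sqrt hpq0.le hpq1)
  -- measure of a single alternating-pattern event
  have hpat : ∀ (b : ℕ), b ≤ 1 → ∀ (n i : ℕ),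
      μ (⋂ m ∈ Finset.Ico i (i + n), X m ⁻¹' {(b + (m - i)) % 2}) ≤
        ENNReal.ofReal (r ^ (n - 1)) := by
    intro b hb n i
    have hmeasb : μ (⋂ m ∈ Finset.Ico i (i + n), X m ⁻¹' {(b + (m - i)) % 2}) =
        ∏ m ∈ Finset.Ico i (i + n), μ (X m ⁻¹' {(b + (m - i)) % 2}) :=
      hindep.meas_biInter fun m _ => ⟨{(b + (m - i)) % 2}, measurableSet_singleton _, rfl⟩
    rw [hmeasb]
    have hsingle : ∀ m ∈ Finset.Ico i (i + n),
        μ (X m ⁻¹' {(b + (m - i)) % 2}) =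
          ENNReal.ofReal (if (b + (m - i)) % 2 = 1 then p else q) := fun m _ =>
      single_meas μ hp0 hq X hmeas hval hdist m _ (by omega)
    rw [Finset.prod_congr rfl hsingle,
      ← ENNReal.ofReal_prod_of_nonneg (fun m _ => by split_ifs <;> linarith)]
    apply ENNReal.ofReal_le_ofReal
    have hreindex : ∏ m ∈ Finset.Ico i (i + n), (if (b + (m - i)) % 2 = 1 then p else q)
        = ∏ j ∈ Finset.range n, (if (b + j) % 2 = 1 then p else q) := by
      rw [Finset.prod_Ico_eq_prod_range]
      simp only [Nat.add_sub_cancel_left]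
    rw [hreindex]
    exact altprod hp0 hp1 hq b n
  -- measure of a single run event
  have hE : ∀ n i : ℕ, μ {ω | switchCount X n i ω = n - 1} ≤
      ENNReal.ofReal (2 * r ^ (n - 1)) := by
    intro n i
    calc μ {ω | switchCount X n i ω = n - 1}
        ≤ μ ((⋂ m ∈ Finset.Ico i (i + n), X m ⁻¹' {(0 + (m - i)) % 2}) ∪
            (⋂ m ∈ Finset.Ico i (i + n), X m ⁻¹' {(1 + (m - i)) % 2})) :=
          measure_mono (switch_subset X hval n i)
      _ ≤ μ (⋂ m ∈ Finset.Ico i (i + n), X m ⁻¹' {(0 + (m - i)) % 2}) +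
          μ (⋂ m ∈ Finset.Ico i (i + n), X m ⁻¹' {(1 + (m - i)) % 2}) := measure_union_le _ _
      _ ≤ ENNReal.ofReal (r ^ (n - 1)) + ENNReal.ofReal (r ^ (n - 1)) :=
          add_le_add (hpat 0 (by omega) n i) (hpat 1 le_rfl n i)
      _ = ENNReal.ofReal (2 * r ^ (n - 1)) := by
          rw [← ENNReal.ofReal_add (by positivity) (by positivity), two_mul]
  -- measure of A k
  have hAbound : ∀ k : ℕ, 1 ≤ k →
      μ (A k) ≤ ENNReal.ofReal ((k : ℝ) ^ T * (2 * r ^ (u k - 1))) := by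
    intro k hk
    have hAeq : A k = ⋃ i ∈ Finset.Icc 1 (k ^ T - u k + 1),
        {ω | switchCount X (u k) i ω = u k - 1} := by
      rw [hA k]; ext ω
      simp [Finset.mem_Icc, Set.mem_setOf_eq, and_assoc]
    rw [hAeq]
    calc μ (⋃ i ∈ Finset.Icc 1 (k ^ T - u k + 1), {ω | switchCount X (u k) i ω = u k - 1})
        ≤ ∑ i ∈ Finset.Icc 1 (k ^ T - u k + 1), μ {ω | switchCount X (u k) i ω = u k - 1} :=
          measure_biUnion_finset_le _ _
      _ ≤ ∑ _i ∈ Finset.Icc 1 (k ^ T - u k + 1), ENNReal.ofReal (2 * r ^ (u k - 1)) :=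
          Finset.sum_le_sum fun i _ => hE (u k) i
      _ = (↑(k ^ T - u k + 1) : ENNReal) * ENNReal.ofReal (2 * r ^ (u k - 1)) := by
          rw [Finset.sum_const, Nat.card_Icc]
          simp [nsmul_eq_mul]
      _ ≤ (↑(k ^ T) : ENNReal) * ENNReal.ofReal (2 * r ^ (u k - 1)) := by
          apply mul_le_mul_left
          have : k ^ T - u k + 1 ≤ k ^ T := by
            have hk1 : 1 ≤ k ^ T := Nat.one_le_pow _ _ hk
            have := hu k
            omega
          exact_mod_cast Nat.cast_le.mpr this
      _ = ENNReal.ofReal ((k : ℝ) ^ T * (2 * r ^ (u k - 1))) := by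
          refine Eq.symm ?_
          rw [ENNReal.ofReal_mul (show (0:ℝ) ≤ (k : ℝ) ^ T by positivity),
            show ((k : ℝ)) ^ T = ((k ^ T : ℕ) : ℝ) by push_cast; ring,
            ENNReal.ofReal_natCast]
  -- analytic bound
  have hana : ∀ k : ℕ, 1 ≤ k →
      (k : ℝ) ^ T * (2 * r ^ (u k - 1)) ≤ (2 / r) * (k : ℝ) ^ (-((T : ℝ) * ε)) := by
    intro k hk
    have hk0 : (0 : ℝ) < (k : ℝ) := by exact_mod_cast hk
    have hkT0 : (0 : ℝ) < (k : ℝ) ^ T := by positivity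
    have hkT1 : (1 : ℝ) ≤ (k : ℝ) ^ T := one_le_pow₀ (by exact_mod_cast hk)
    set L := Real.logb (1 / r) ((k : ℝ) ^ T) with hLdef
    have h1r : 1 < 1 / r := (one_lt_div hr0).mpr hr1
    have hL0 : 0 ≤ L := Real.logb_nonneg h1r hkT1
    have hx0 : 0 ≤ (1 + ε) * L := by positivity
    have hN : u k - 1 = (⌊(1 + ε) * L⌋).toNat := by rw [hu k, ← hLdef]; omega
    have hNge : (1 + ε) * L - 1 ≤ ((⌊(1 + ε) * L⌋).toNat : ℝ) := by
      have h1 : ((⌊(1 + ε) * L⌋).toNat : ℤ) = ⌊(1 + ε) * L⌋ :=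
        Int.toNat_of_nonneg (Int.floor_nonneg.mpr hx0)
      have h2 : ((⌊(1 + ε) * L⌋).toNat : ℝ) = ((⌊(1 + ε) * L⌋ : ℤ) : ℝ) := by
        exact_mod_cast congrArg (fun z : ℤ => (z : ℝ)) h1
      rw [h2]
      exact (Int.sub_one_lt_floor _).le
    have hstep1 : r ^ (u k - 1) ≤ r ^ ((1 + ε) * L - 1 : ℝ) := by
      rw [hN]
      calc r ^ ((⌊(1 + ε) * L⌋).toNat) = r ^ (((⌊(1 + ε) * L⌋).toNat : ℝ)) :=
            (Real.rpow_natCast r _).symm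
        _ ≤ _ := Real.rpow_le_rpow_of_exponent_ge hr0 hr1.le hNge
    have hlogr : Real.log r < 0 := Real.log_neg hr0 hr1
    have hkey : r ^ ((1 + ε) * L : ℝ) = ((k : ℝ) ^ T) ^ (-(1 + ε) : ℝ) := by
      have hb0 : (0 : ℝ) < 1 / r := by positivity
      have hb1 : (1 : ℝ) / r ≠ 1 := ne_of_gt h1r
      have hL : (1 / r) ^ (L : ℝ) = (k : ℝ) ^ T := by
        rw [hLdef]; exact Real.rpow_logb hb0 hb1 hkT0
      calc r ^ ((1 + ε) * L : ℝ) = ((1 / r)⁻¹) ^ ((1 + ε) * L : ℝ) := by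
            rw [one_div, inv_inv]
        _ = ((1 / r) ^ ((1 + ε) * L : ℝ))⁻¹ := Real.inv_rpow hb0.le _
        _ = (((1 / r) ^ (L : ℝ)) ^ ((1 + ε) : ℝ))⁻¹ := by
            rw [mul_comm, Real.rpow_mul hb0.le]
        _ = (((k : ℝ) ^ T) ^ ((1 + ε) : ℝ))⁻¹ := by rw [hL]
        _ = ((k : ℝ) ^ T) ^ (-(1 + ε) : ℝ) := (Real.rpow_neg hkT0.le _).symm
    have hstep2 : r ^ ((1 + ε) * L - 1 : ℝ) = r⁻¹ * ((k : ℝ) ^ T) ^ (-(1 + ε) : ℝ) := by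
      rw [Real.rpow_sub hr0, Real.rpow_one, hkey]
      ring
    have hfinal : (k : ℝ) ^ T * ((k : ℝ) ^ T) ^ (-(1 + ε) : ℝ) =
        (k : ℝ) ^ (-((T : ℝ) * ε)) := by
      rw [← Real.rpow_natCast (k : ℝ) T, ← Real.rpow_mul hk0.le, ← Real.rpow_add hk0]
      congr 1
      ring
    calc (k : ℝ) ^ T * (2 * r ^ (u k - 1))
        ≤ (k : ℝ) ^ T * (2 * (r⁻¹ * ((k : ℝ) ^ T) ^ (-(1 + ε) : ℝ))) := by
          refine mul_le_mul_of_nonneg_left ?_ hkT0.le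
          refine mul_le_mul_of_nonneg_left ?_ (by norm_num)
          exact hstep1.trans (le_of_eq hstep2)
      _ = (2 / r) * ((k : ℝ) ^ T * ((k : ℝ) ^ T) ^ (-(1 + ε) : ℝ)) := by ring
      _ = (2 / r) * (k : ℝ) ^ (-((T : ℝ) * ε)) := by rw [hfinal]
  -- summability
  set f : ℕ → ℝ := fun k => (2 / r) * ((k : ℝ) + 1) ^ (-((T : ℝ) * ε)) with hf
  have hf_nonneg : ∀ k, 0 ≤ f k := fun k => by positivity
  have hf_sum : Summable f := by
    apply Summable.mul_left
    have h := Real.summable_nat_rpow.mpr (show -((T : ℝ) * ε) < -1 by linarith)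
    have h2 := (summable_nat_add_iff 1).mpr h
    refine h2.congr fun k => ?_
    push_cast
    ring_nf
  have hμA : ∀ k : ℕ, μ (A (k + 1)) ≤ ENNReal.ofReal (f k) := by
    intro k
    refine (hAbound (k + 1) (by omega)).trans (ENNReal.ofReal_le_ofReal ?_)
    refine (hana (k + 1) (by omega)).trans (le_of_eq ?_)
    rw [hf]
    push_cast
    ring_nf
  have hts : ∑' k, μ (A (k + 1)) ≠ ⊤ := by
    have h1 : ∑' k, μ (A (k + 1)) ≤ ∑' k, ENNReal.ofReal (f k) := ENNReal.tsum_le_tsum hμA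
    have h2 : ∑' k, ENNReal.ofReal (f k) = ENNReal.ofReal (∑' k, f k) :=
      (ENNReal.ofReal_tsum_of_nonneg hf_nonneg hf_sum).symm
    exact ne_top_of_le_ne_top (by rw [h2]; exact ENNReal.ofReal_ne_top) h1
  exact ⟨ENNReal.summable_toReal hts, measure_limsup_atTop_eq_zero hts⟩
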